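/- Let 𝒜 be a finite nonempty set, μ a translation invariant probability measure on 𝒜^(ℤ^d), (A, G) a tiling of ℤ^d with A partitioned into nonempty sets A_1, …, A_N, A_{<k} = ∪_{i<k} A_i, and G_n = {Σ g_i ê_i : |g_i| ≤ n}. Then for each k, S( A_k + G_n | A_{<k} + G_n ) = Σ_{g ∈ G_n} S( A_k | (A_k + {h ∈ (G_n − g) : h < 0}) ∪ (A_{<k} + (G_n − g)) ), where < is the lexicographic order on G and G_n − g = {h − g : h ∈ G_n}. -/

import Mathlib

open MeasureTheory Real Filter Pointwise

/-- The lattice `ℤ^d`. -/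
abbrev LatZ (d : ℕ) := Fin d → ℤ

/-- Probability of the cylinder set determined by the configuration `x` on the finite set `Λ`. -/
noncomputable def cylProb {d : ℕ} {𝒜 : Type*} [MeasurableSpace 𝒜]
    (μ : Measure (LatZ d → 𝒜)) (Λ : Finset (LatZ d)) (x : Λ → 𝒜) : ℝ :=
  (μ {ω | ∀ v : Λ, ω v.1 = x v}).toReal

/-- The entropy `S(Λ)` of a finite set of sites `Λ` with respect to `μ`. -/
noncomputable def entS {d : ℕ} {𝒜 : Type*} [Fintype 𝒜] [MeasurableSpace 𝒜]
    (μ : Measure (LatZ d → 𝒜)) (Λ : Finset (LatZ d)) : ℝ :=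
  -∑ x : (Λ → 𝒜), cylProb μ Λ x * Real.log (cylProb μ Λ x)

/-- The conditional entropy `S(Λ | Λ')` (terms with zero probability vanish since
`Real.log 0 = 0` and `0 * log 0 = 0`). -/
noncomputable def condEnt {d : ℕ} {𝒜 : Type*} [Fintype 𝒜] [MeasurableSpace 𝒜]
    (μ : Measure (LatZ d → 𝒜)) (Λ Λ' : Finset (LatZ d)) : ℝ :=
  -∑ x : ((Λ ∪ Λ' : Finset (LatZ d)) → 𝒜),
      cylProb μ (Λ ∪ Λ') x *
        Real.log (cylProb μ (Λ ∪ Λ') x /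
          cylProb μ Λ' (fun v => x ⟨v.1, Finset.mem_union_right Λ v.2⟩))

/-- The shift map `σ_v`, `(σ_v x)(u) = x(u + v)`. -/
def shiftMap {d : ℕ} {𝒜 : Type*} (v : LatZ d) (ω : LatZ d → 𝒜) : LatZ d → 𝒜 :=
  fun u => ω (u + v)

/-- `μ` is translation invariant if it is preserved by every shift `σ_v`. -/
def TransInv {d : ℕ} {𝒜 : Type*} [MeasurableSpace 𝒜] (μ : Measure (LatZ d → 𝒜)) : Prop :=
  ∀ v : LatZ d, μ.map (shiftMap v) = μ

/-- The box `V_n = {v ∈ ℤ^d : |v_i| ≤ n ∀ i}` (also used as coordinate box `G_n`). -/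
noncomputable def Vbox (d n : ℕ) : Finset (LatZ d) :=
  Fintype.piFinset fun _ => Finset.Icc (-(n : ℤ)) (n : ℤ)

open Classical in
/-- The finite set `Λ' ∩ V_n` for a (possibly infinite) `Λ' ⊆ ℤ^d`. -/
noncomputable def interBox (d : ℕ) (Λ' : Set (LatZ d)) (n : ℕ) : Finset (LatZ d) :=
  (Vbox d n).filter (· ∈ Λ')

/-- The lattice point `Σ_i c_i ê_i` with coordinates `c` in the basis `e`. -/
def latt {d : ℕ} (e : Fin d → LatZ d) (c : Fin d → ℤ) : LatZ d :=
  ∑ i, c i • e i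

/-- Lexicographic comparison of coordinate vectors. -/
def lexLt {d : ℕ} (c c' : Fin d → ℤ) : Prop :=
  ∃ i, c i < c' i ∧ ∀ j, j < i → c j = c' j

/-- The subgroup `G` generated by `e`, as a set. -/
def Gfull {d : ℕ} (e : Fin d → LatZ d) : Set (LatZ d) :=
  Set.range (latt e)

/-- `G^- = {g ∈ G : g < 0}` in the lexicographic order on `G`. -/
def Gneg {d : ℕ} (e : Fin d → LatZ d) : Set (LatZ d) :=
  {g | ∃ c, lexLt c 0 ∧ g = latt e c}

/-- The finite subset `G_n = {Σ g_i ê_i : |g_i| ≤ n}` of `G`. -/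
noncomputable def GboxF {d : ℕ} (e : Fin d → LatZ d) (n : ℕ) : Finset (LatZ d) :=
  (Vbox d n).image (latt e)

/-- A tiling `(A, G)` of `ℤ^d`, with `G` the subgroup generated by the
`ℤ`-linearly independent family `e`. -/
structure IsTiling {d : ℕ} (A : Finset (LatZ d)) (e : Fin d → LatZ d) : Prop where
  zero_mem : (0 : LatZ d) ∈ A
  indep : LinearIndependent ℤ e
  cover : ∀ v : LatZ d, ∃ a ∈ A, ∃ c : Fin d → ℤ, v = a + latt e c
  disj : ∀ c c' : Fin d → ℤ, latt e c ≠ latt e c' →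
    Disjoint (A.image (· + latt e c)) (A.image (· + latt e c'))

/-- The unit cube `U_d`. -/
noncomputable def Ud (d : ℕ) : Finset (LatZ d) :=
  Fintype.piFinset fun _ => Finset.Icc (-1 : ℤ) 1

open Classical in
/-- The boundary `∂Λ = Λ ∩ (U_d + Λ^C)`. -/
noncomputable def bdry {d : ℕ} (Λ : Finset (LatZ d)) : Finset (LatZ d) :=
  Λ.filter (fun v => v ∈ (↑(Ud d) : Set (LatZ d)) + (↑Λ : Set (LatZ d))ᶜ)



/-! ### Auxiliary lemmas -/

section TelescopeAux

lemma telescope_aux {β : Type*} [LinearOrder β] (F : Finset β → ℝ) (s : Finset β) :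
    ∑ g ∈ s, (F (s.filter (· ≤ g)) - F (s.filter (· < g))) = F s - F ∅ := by
  induction s using Finset.strongInduction with
  | _ s ih =>
    rcases s.eq_empty_or_nonempty with rfl | hs
    · simp
    · set m := s.max' hs with hm
      have hmem : m ∈ s := s.max'_mem hs
      have h1 : s.filter (· ≤ m) = s := by
        apply Finset.filter_true_of_mem
        intro g hg; exact s.le_max' g hg
      have h2 : s.filter (· < m) = s.erase m := by
        ext g
        simp only [Finset.mem_filter, Finset.mem_erase]
        constructor
        · rintro ⟨hg, hlt⟩; exact ⟨ne_of_lt hlt, hg⟩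
        · rintro ⟨hne, hg⟩; exact ⟨hg, lt_of_le_of_ne (s.le_max' g hg) hne⟩
      rw [← Finset.add_sum_erase _ _ hmem, h1, h2]
      have key : ∀ g ∈ s.erase m,
          F (s.filter (· ≤ g)) - F (s.filter (· < g))
          = F ((s.erase m).filter (· ≤ g)) - F ((s.erase m).filter (· < g)) := by
        intro g hg
        have hgs : g ∈ s := Finset.mem_of_mem_erase hg
        have hgm : g < m := lt_of_le_of_ne (s.le_max' g hgs) (Finset.ne_of_mem_erase hg)
        have e1 : (s.erase m).filter (· ≤ g) = s.filter (· ≤ g) := by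
          ext a
          simp only [Finset.mem_filter, Finset.mem_erase]
          constructor
          · rintro ⟨⟨_, ha⟩, h⟩; exact ⟨ha, h⟩
          · rintro ⟨ha, h⟩
            exact ⟨⟨fun hc => absurd (hc ▸ h) (not_le.2 hgm), ha⟩, h⟩
        have e2 : (s.erase m).filter (· < g) = s.filter (· < g) := by
          ext a
          simp only [Finset.mem_filter, Finset.mem_erase]
          constructor
          · rintro ⟨⟨_, ha⟩, h⟩; exact ⟨ha, h⟩
          · rintro ⟨ha, h⟩
            exact ⟨⟨fun hc => absurd (hc ▸ h) (not_lt.2 hgm.le), ha⟩, h⟩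
        rw [e1, e2]
      rw [Finset.sum_congr rfl key, ih (s.erase m) (Finset.erase_ssubset hmem)]
      ring

open Classical in
lemma telescope_aux' {β γ : Type*} [LinearOrder γ] (F : Finset β → ℝ) (s : Finset β)
    (φ : β → γ) (hφ : Function.Injective φ) :
    ∑ g ∈ s, (F (s.filter (fun a => φ a < φ g ∨ a = g)) - F (s.filter (fun a => φ a < φ g)))
      = F s - F ∅ := by
  classical
  set F' : Finset γ → ℝ := fun t => F (s.filter (fun a => φ a ∈ t)) with hF'
  have key : ∀ g ∈ s,
      F (s.filter (fun a => φ a < φ g ∨ a = g)) - F (s.filter (fun a => φ a < φ g))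
      = F' ((s.image φ).filter (· ≤ φ g)) - F' ((s.image φ).filter (· < φ g)) := by
    intro g hg
    have e1 : s.filter (fun a => φ a ∈ (s.image φ).filter (· ≤ φ g))
        = s.filter (fun a => φ a < φ g ∨ a = g) := by
      apply Finset.filter_congr
      intro a ha
      simp only [Finset.mem_filter, Finset.mem_image]
      constructor
      · rintro ⟨_, hle⟩
        rcases lt_or_eq_of_le hle with h | h
        · exact Or.inl h
        · exact Or.inr (hφ h)
      · rintro (h | rfl)
        · exact ⟨⟨a, ha, rfl⟩, h.le⟩
        · exact ⟨⟨a, ha, rfl⟩, le_rfl⟩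
    have e2 : s.filter (fun a => φ a ∈ (s.image φ).filter (· < φ g))
        = s.filter (fun a => φ a < φ g) := by
      apply Finset.filter_congr
      intro a ha
      simp only [Finset.mem_filter, Finset.mem_image]
      exact ⟨fun ⟨_, h⟩ => h, fun h => ⟨⟨a, ha, rfl⟩, h⟩⟩
    rw [hF']
    dsimp only
    rw [e1, e2]
  rw [Finset.sum_congr rfl key]
  have := telescope_aux F' (s.image φ)
  rw [Finset.sum_image (fun a _ b _ h => hφ h)] at this
  rw [this, hF']
  dsimp only
  congr 1
  · congr 1
    apply Finset.filter_true_of_mem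
    intro a ha; exact Finset.mem_image_of_mem φ ha
  · congr 1
    simp

end TelescopeAux

section EntAux
variable {d : ℕ} {𝒜 : Type*} [Fintype 𝒜] [MeasurableSpace 𝒜] [MeasurableSingletonClass 𝒜]

omit [Fintype 𝒜] in
lemma cylSet_measurable (Λ : Finset (LatZ d)) (x : Λ → 𝒜) :
    MeasurableSet {ω : LatZ d → 𝒜 | ∀ v : Λ, ω v.1 = x v} := by
  have : {ω : LatZ d → 𝒜 | ∀ v : Λ, ω v.1 = x v}
      = ⋂ v : Λ, (fun ω : LatZ d → 𝒜 => ω v.1) ⁻¹' {x v} := by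
    ext ω; simp [Set.mem_iInter]
  rw [this]
  exact MeasurableSet.iInter fun v => (measurable_pi_apply _) (measurableSet_singleton _)

omit [Fintype 𝒜] [MeasurableSingletonClass 𝒜] in
lemma cylProb_nonneg (μ : Measure (LatZ d → 𝒜)) (Λ : Finset (LatZ d)) (x : Λ → 𝒜) :
    0 ≤ cylProb μ Λ x := ENNReal.toReal_nonneg

/-- Restriction of a configuration to a subset of sites. -/
def restrCfg {Λ' Λ : Finset (LatZ d)} (h : Λ' ⊆ Λ) (x : Λ → 𝒜) : Λ' → 𝒜 := fun v => x ⟨v.1, h v.2⟩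

open Classical in
lemma cylProb_sum (μ : Measure (LatZ d → 𝒜)) [IsFiniteMeasure μ]
    {Λ' Λ : Finset (LatZ d)} (h : Λ' ⊆ Λ) (y : Λ' → 𝒜) :
    cylProb μ Λ' y = ∑ x ∈ Finset.univ.filter (fun x : Λ → 𝒜 => restrCfg h x = y),
      cylProb μ Λ x := by
  classical
  have hset : {ω : LatZ d → 𝒜 | ∀ v : Λ', ω v.1 = y v}
      = ⋃ x ∈ Finset.univ.filter (fun x : Λ → 𝒜 => restrCfg h x = y),
          {ω : LatZ d → 𝒜 | ∀ v : Λ, ω v.1 = x v} := by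
    ext ω
    simp only [Set.mem_setOf_eq, Set.mem_iUnion, Finset.mem_filter, Finset.mem_univ, true_and]
    constructor
    · intro hω
      refine ⟨fun v => ω v.1, ?_, fun v => rfl⟩
      funext v; exact hω v
    · rintro ⟨x, hx, hωx⟩ v
      have := congrFun hx v
      simp only [restrCfg] at this
      rw [← this]; exact hωx ⟨v.1, h v.2⟩
  have hdisj : (↑(Finset.univ.filter
      (fun x : Λ → 𝒜 => restrCfg h x = y) : Finset (Λ → 𝒜)) : Set (Λ → 𝒜)).PairwiseDisjoint
      (fun x : Λ → 𝒜 => {ω : LatZ d → 𝒜 | ∀ v : Λ, ω v.1 = x v}) := by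
    intro x₁ _ x₂ _ hne
    refine Set.disjoint_left.2 fun ω h1 h2 => hne ?_
    funext v; rw [← h1 v, ← h2 v]
  rw [cylProb, hset, measure_biUnion_finset hdisj (fun x _ => cylSet_measurable Λ x),
    ENNReal.toReal_sum (fun x _ => measure_ne_top μ _)]
  rfl

lemma cylProb_le (μ : Measure (LatZ d → 𝒜)) [IsFiniteMeasure μ]
    {Λ' Λ : Finset (LatZ d)} (h : Λ' ⊆ Λ) (x : Λ → 𝒜) :
    cylProb μ Λ x ≤ cylProb μ Λ' (restrCfg h x) := by
  classical
  rw [cylProb_sum μ h (restrCfg h x)]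
  exact Finset.single_le_sum (fun i _ => cylProb_nonneg μ Λ i)
    (Finset.mem_filter.2 ⟨Finset.mem_univ _, rfl⟩)

lemma condEnt_eq_sub (μ : Measure (LatZ d → 𝒜)) [IsFiniteMeasure μ] (Λ Λ' : Finset (LatZ d)) :
    condEnt μ Λ Λ' = entS μ (Λ ∪ Λ') - entS μ Λ' := by
  classical
  set U := Λ ∪ Λ' with hU
  have hsub : Λ' ⊆ U := Finset.subset_union_right
  have hre : ∀ x : U → 𝒜, (fun v : Λ' => x ⟨v.1, Finset.mem_union_right Λ v.2⟩)
      = restrCfg hsub x := fun x => rfl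
  have step : ∀ x : U → 𝒜,
      cylProb μ U x * Real.log (cylProb μ U x / cylProb μ Λ' (restrCfg hsub x))
      = cylProb μ U x * Real.log (cylProb μ U x)
        - cylProb μ U x * Real.log (cylProb μ Λ' (restrCfg hsub x)) := by
    intro x
    rcases eq_or_ne (cylProb μ U x) 0 with hp | hp
    · simp [hp]
    · have hq : cylProb μ Λ' (restrCfg hsub x) ≠ 0 := by
        intro h0
        have := cylProb_le μ hsub x
        rw [h0] at this
        exact hp (le_antisymm this (cylProb_nonneg μ U x))
      rw [Real.log_div hp hq]; ring
  rw [condEnt]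
  simp only [hre, step]
  show -∑ x : U → 𝒜, cylProb μ U x * Real.log (cylProb μ U x / cylProb μ Λ' (restrCfg hsub x)) = _
  simp only [step]
  rw [Finset.sum_sub_distrib]
  have hfib : ∑ x : U → 𝒜, cylProb μ U x * Real.log (cylProb μ Λ' (restrCfg hsub x))
      = ∑ y : Λ' → 𝒜, cylProb μ Λ' y * Real.log (cylProb μ Λ' y) := by
    rw [← Finset.sum_fiberwise Finset.univ (restrCfg hsub)
      (fun x => cylProb μ U x * Real.log (cylProb μ Λ' (restrCfg hsub x)))]
    refine Finset.sum_congr rfl fun y _ => ?_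
    have : ∀ x ∈ Finset.univ.filter (fun x : U → 𝒜 => restrCfg hsub x = y),
        cylProb μ U x * Real.log (cylProb μ Λ' (restrCfg hsub x))
        = cylProb μ U x * Real.log (cylProb μ Λ' y) := by
      intro x hx
      rw [(Finset.mem_filter.1 hx).2]
    rw [Finset.sum_congr rfl this, ← Finset.sum_mul, ← cylProb_sum μ hsub y]
  rw [hfib, entS, entS]
  ring

omit [Fintype 𝒜] [MeasurableSingletonClass 𝒜] in
lemma shiftMap_measurable (v : LatZ d) : Measurable (shiftMap (d := d) (𝒜 := 𝒜) v) :=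
  measurable_pi_lambda _ fun u => measurable_pi_apply (u + v)

/-- The shifted configuration. -/
def shiftCfg {Λ : Finset (LatZ d)} (g : LatZ d) (x : Λ → 𝒜) :
    (Λ.image (· + g) : Finset (LatZ d)) → 𝒜 :=
  fun w => x ⟨w.1 - g, by
    obtain ⟨v, hv, he⟩ := Finset.mem_image.1 w.2
    simpa [← he] using hv⟩

omit [Fintype 𝒜] in
lemma cylProb_shift (μ : Measure (LatZ d → 𝒜)) (hinv : TransInv μ)
    (Λ : Finset (LatZ d)) (g : LatZ d) (x : Λ → 𝒜) :
    cylProb μ (Λ.image (· + g)) (shiftCfg g x) = cylProb μ Λ x := by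
  have hpre : (shiftMap (𝒜 := 𝒜) g) ⁻¹' {ω | ∀ v : Λ, ω v.1 = x v}
      = {ω : LatZ d → 𝒜 | ∀ w : (Λ.image (· + g) : Finset (LatZ d)),
          ω w.1 = shiftCfg g x w} := by
    ext ω
    simp only [Set.mem_preimage, Set.mem_setOf_eq, shiftMap]
    constructor
    · rintro h ⟨w, hw⟩
      obtain ⟨v, hv, rfl⟩ := Finset.mem_image.1 hw
      have := h ⟨v, hv⟩
      simp only [shiftCfg]
      convert this using 2
      · simp
    · rintro h ⟨v, hv⟩
      have hw : v + g ∈ Λ.image (· + g) := Finset.mem_image_of_mem _ hv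
      have := h ⟨v + g, hw⟩
      simp only [shiftCfg] at this
      convert this using 2
      simp
  rw [cylProb, cylProb]
  conv_rhs => rw [← hinv g,
    Measure.map_apply (shiftMap_measurable g) (cylSet_measurable Λ x), hpre]

lemma entS_shift (μ : Measure (LatZ d → 𝒜)) (hinv : TransInv μ)
    (Λ : Finset (LatZ d)) (g : LatZ d) :
    entS μ (Λ.image (· + g)) = entS μ Λ := by
  classical
  rw [entS, entS, neg_inj]
  have hbij : Function.Bijective (shiftCfg (𝒜 := 𝒜) (Λ := Λ) g) := by
    constructor
    · intro x₁ x₂ h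
      funext ⟨v, hv⟩
      have hw : v + g ∈ Λ.image (· + g) := Finset.mem_image_of_mem _ hv
      have := congrFun h ⟨v + g, hw⟩
      simpa [shiftCfg] using this
    · intro y
      refine ⟨fun v => y ⟨v.1 + g, Finset.mem_image_of_mem _ v.2⟩, ?_⟩
      funext ⟨w, hw⟩
      simp only [shiftCfg]
      congr 1
      apply Subtype.ext
      simp
  rw [← Function.Bijective.sum_comp hbij
    (fun y => cylProb μ (Λ.image (· + g)) y * Real.log (cylProb μ (Λ.image (· + g)) y))]
  refine Finset.sum_congr rfl fun x _ => ?_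
  rw [cylProb_shift μ hinv Λ g x]

lemma condEnt_shift (μ : Measure (LatZ d → 𝒜)) [IsFiniteMeasure μ] (hinv : TransInv μ)
    (Λ Λ' : Finset (LatZ d)) (g : LatZ d) :
    condEnt μ (Λ.image (· + g)) (Λ'.image (· + g)) = condEnt μ Λ Λ' := by
  rw [condEnt_eq_sub, condEnt_eq_sub, ← Finset.image_union, entS_shift μ hinv _ g,
    entS_shift μ hinv Λ' g]

end EntAux

section LattAux
variable {d : ℕ} (e : Fin d → LatZ d)

lemma latt_sub (a b : Fin d → ℤ) : latt e (a - b) = latt e a - latt e b := by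
  simp [latt, sub_smul, Finset.sum_sub_distrib]

lemma latt_add (a b : Fin d → ℤ) : latt e (a + b) = latt e a + latt e b := by
  simp [latt, add_smul, Finset.sum_add_distrib]

lemma latt_inj (h : LinearIndependent ℤ e) : Function.Injective (latt e) := by
  intro a b hab
  have h0 : latt e (a - b) = 0 := by rw [latt_sub]; rw [hab]; ring
  have := (Fintype.linearIndependent_iff.1 h) (a - b) h0
  funext i
  have := this i
  simp only [Pi.sub_apply, sub_eq_zero] at this
  exact this

lemma lexLt_sub_zero (a c : Fin d → ℤ) : lexLt (a - c) 0 ↔ lexLt a c := by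
  constructor
  · rintro ⟨i, hi, hj⟩
    exact ⟨i, by simpa [sub_neg] using hi, fun j hji => by
      have := hj j hji; simpa [sub_eq_zero] using this⟩
  · rintro ⟨i, hi, hj⟩
    exact ⟨i, by simpa [sub_neg] using hi, fun j hji => by
      have := hj j hji; simp [this]⟩

lemma mem_Gneg_iff (h : LinearIndependent ℤ e) (a : Fin d → ℤ) :
    latt e a ∈ Gneg e ↔ lexLt a 0 := by
  constructor
  · rintro ⟨c, hc, hac⟩
    rw [latt_inj e h hac]; exact hc
  · intro ha; exact ⟨a, ha, rfl⟩

lemma toLex_lt_iff (a b : Fin d → ℤ) :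
    toLex a < toLex b ↔ lexLt a b := by
  constructor
  · rintro ⟨i, hj, hi⟩
    exact ⟨i, hi, fun j hji => hj j hji⟩
  · rintro ⟨i, hi, hj⟩
    exact ⟨i, fun j hji => hj j hji, hi⟩

lemma image_add_const {s : Finset (LatZ d)} {g : LatZ d} :
    s.image (· + g) = s + ({g} : Finset (LatZ d)) := by
  rw [Finset.add_singleton]
  rfl

lemma image_latt_add (T : Finset (Fin d → ℤ)) (c : Fin d → ℤ) :
    T.image (latt e) + ({latt e c} : Finset (LatZ d)) = (T.image (· + c)).image (latt e) := by
  rw [← image_add_const, Finset.image_image, Finset.image_image]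
  apply Finset.image_congr
  intro a _
  exact (latt_add e a c).symm

end LattAux

open Classical in
/-- For a translation invariant `μ` and a tiling `(A, G)` with `A`
partitioned into `A_1, …, A_N`, for each `k`:
`S(A_k + G_n | A_{<k} + G_n)
  = Σ_{g ∈ G_n} S(A_k | (A_k + {h ∈ G_n − g : h < 0}) ∪ (A_{<k} + (G_n − g)))`,
with `<` the lexicographic order on `G`. -/
theorem block_condEnt_translation_decomposition {d : ℕ} {𝒜 : Type*} [Fintype 𝒜] [Nonempty 𝒜]
    [MeasurableSpace 𝒜] [MeasurableSingletonClass 𝒜]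
    (μ : Measure (LatZ d → 𝒜)) [IsProbabilityMeasure μ] (hinv : TransInv μ)
    (A : Finset (LatZ d)) (e : Fin d → LatZ d) (htile : IsTiling A e)
    (N : ℕ) (parts : Fin N → Finset (LatZ d))
    (hne : ∀ k, (parts k).Nonempty)
    (hdisj : ∀ k l, k ≠ l → Disjoint (parts k) (parts l))
    (hunion : Finset.univ.biUnion parts = A) (n : ℕ) (k : Fin N) :
    condEnt μ (parts k + GboxF e n) ((Finset.Iio k).biUnion parts + GboxF e n) =
      ∑ g ∈ GboxF e n,
        condEnt μ (parts k)
          ((parts k + ((GboxF e n).image (fun h => h - g)).filter (fun h => h ∈ Gneg e)) ∪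
            ((Finset.Iio k).biUnion parts + (GboxF e n).image (fun h => h - g))) := by
  classical
  have hinj : Function.Injective (latt e) := latt_inj e htile.indep
  set B := (Finset.Iio k).biUnion parts with hB
  simp only [GboxF]
  set VL := (Vbox d n).image (latt e) with hVL
  set F : Finset (Fin d → ℤ) → ℝ := fun t =>
    entS μ ((parts k + t.image (latt e)) ∪ (B + VL)) with hF
  rw [Finset.sum_image (fun a _ b _ h => hinj h)]
  have hterm : ∀ c ∈ Vbox d n,
      condEnt μ (parts k)
          ((parts k + (VL.image (fun h => h - latt e c)).filter (fun h => h ∈ Gneg e)) ∪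
            (B + VL.image (fun h => h - latt e c)))
      = F ((Vbox d n).filter (fun a => lexLt a c ∨ a = c))
        - F ((Vbox d n).filter (fun a => lexLt a c)) := by
    intro c hc
    set D := (Vbox d n).image (· - c) with hD
    have hG1 : VL.image (fun h => h - latt e c) = D.image (latt e) := by
      rw [hVL, hD, Finset.image_image, Finset.image_image]
      apply Finset.image_congr
      intro a _
      simp only [Function.comp_apply]
      exact (latt_sub e a c).symm
    have hG2 : (D.image (latt e)).filter (fun h => h ∈ Gneg e)
        = (D.filter (fun a => lexLt a 0)).image (latt e) := by
      rw [Finset.filter_image]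
      congr 1
      apply Finset.filter_congr
      intro a _
      simp [mem_Gneg_iff e htile.indep a]
    have hDfilt : (D.filter (fun a => lexLt a 0)).image (· + c)
        = (Vbox d n).filter (fun a => lexLt a c) := by
      rw [hD, Finset.filter_image]
      have : (Vbox d n).filter (fun a => lexLt (a - c) 0)
          = (Vbox d n).filter (fun a => lexLt a c) := by
        apply Finset.filter_congr
        intro a _
        simp [lexLt_sub_zero]
      rw [this, Finset.image_image]
      have : ((· + c) ∘ (· - c)) = (id : (Fin d → ℤ) → (Fin d → ℤ)) := by
        funext a; simp
      rw [this, Finset.image_id]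
    have hDall : D.image (· + c) = Vbox d n := by
      rw [hD, Finset.image_image]
      have : ((· + c) ∘ (· - c)) = (id : (Fin d → ℤ) → (Fin d → ℤ)) := by
        funext a; simp
      rw [this, Finset.image_id]
    rw [hG1, hG2]
    rw [← condEnt_shift μ hinv (parts k)
      ((parts k + (D.filter (fun a => lexLt a 0)).image (latt e)) ∪ (B + D.image (latt e)))
      (latt e c)]
    have himg : ((parts k + (D.filter (fun a => lexLt a 0)).image (latt e))
          ∪ (B + D.image (latt e))).image (· + latt e c)
        = (parts k + ((Vbox d n).filter (fun a => lexLt a c)).image (latt e)) ∪ (B + VL) := by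
      rw [Finset.image_union, image_add_const, image_add_const, add_assoc, add_assoc,
        image_latt_add, image_latt_add, hDfilt, hDall]
    rw [himg, image_add_const, condEnt_eq_sub]
    have hfirst : (parts k + ({latt e c} : Finset (LatZ d)))
          ∪ ((parts k + ((Vbox d n).filter (fun a => lexLt a c)).image (latt e)) ∪ (B + VL))
        = (parts k + ((Vbox d n).filter (fun a => lexLt a c ∨ a = c)).image (latt e))
          ∪ (B + VL) := by
      rw [← Finset.union_assoc, ← Finset.add_union]
      congr 2
      have hins : (Vbox d n).filter (fun a => lexLt a c ∨ a = c)
          = insert c ((Vbox d n).filter (fun a => lexLt a c)) := by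
        ext a
        simp only [Finset.mem_filter, Finset.mem_insert]
        constructor
        · rintro ⟨ha, h | h⟩
          · exact Or.inr ⟨ha, h⟩
          · exact Or.inl h
        · rintro (rfl | ⟨ha, h⟩)
          · exact ⟨hc, Or.inr rfl⟩
          · exact ⟨ha, Or.inl h⟩
      rw [hins, Finset.image_insert, Finset.insert_eq]
    rw [hfirst, hF]
  rw [Finset.sum_congr rfl hterm]
  letI : LinearOrder (Lex (Fin d → ℤ)) :=
    @Pi.Lex.linearOrder (Fin d) (fun _ => ℤ) _
      (inferInstance : WellFoundedLT (Fin d)) _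
  have htel := telescope_aux' (γ := Lex (Fin d → ℤ)) F (Vbox d n) toLex
    (fun a b h => by simpa using congrArg ofLex h)
  simp only [show ∀ a b : Fin d → ℤ, @LT.lt (Lex (Fin d → ℤ)) (@Preorder.toLT _
    (@PartialOrder.toPreorder _ (@SemilatticeInf.toPartialOrder _ (@Lattice.toSemilatticeInf _
      (@DistribLattice.toLattice _ (@instDistribLatticeOfLinearOrder _ this))))))
      (toLex a) (toLex b) ↔ lexLt a b from toLex_lt_iff] at htel
  rw [htel]
  rw [condEnt_eq_sub, hF]
  simp only [Finset.image_empty, Finset.add_empty, Finset.empty_union]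
  rfl
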